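/- For every simple graph G and integer vector x indexed by the edges of G, x lies in the lattice generated by the cuts of G if and only if x(C) is even for every circuit C of G. -/

import Mathlib

open scoped Classical

/-- `e` is an edge crossing the vertex set `S` (exactly one endpoint in `S`). -/
def InCut {V : Type*} (S : Set V) (e : Sym2 V) : Prop :=
  ∃ i j, e = s(i, j) ∧ i ∈ S ∧ j ∉ S

/-- The integer cut vector `δ(S)` of a graph `G`, as a `{0,1}`-vector indexed by `Sym2 V`
(supported on the edges of `G`). -/
noncomputable def cutVecZ {V : Type*} (G : SimpleGraph V) (S : Set V) : Sym2 V → ℤ :=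
  fun e => if e ∈ G.edgeSet ∧ InCut S e then 1 else 0

namespace CutLatticeAux

variable {V : Type*}

lemma inCut_iff (S : Set V) (a b : V) :
    InCut S s(a, b) ↔ (a ∈ S ∧ b ∉ S) ∨ (b ∈ S ∧ a ∉ S) := by
  constructor
  · rintro ⟨i, j, hij, hi, hj⟩
    rw [Sym2.eq_iff] at hij
    rcases hij with ⟨rfl, rfl⟩ | ⟨rfl, rfl⟩
    · exact Or.inl ⟨hi, hj⟩
    · exact Or.inr ⟨hi, hj⟩
  · rintro (⟨h1, h2⟩ | ⟨h1, h2⟩)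
    · exact ⟨a, b, rfl, h1, h2⟩
    · exact ⟨b, a, Sym2.eq_swap.symm, h1, h2⟩

/-- Sum of `x` over the edges of a walk, with multiplicity. -/
def Lsum' (x : Sym2 V → ℤ) {G : SimpleGraph V} {u v : V} (w : G.Walk u v) : ℤ :=
  (w.edges.map x).sum

lemma split_closed {G : SimpleGraph V} (x : Sym2 V → ℤ) {v : V} (w : G.Walk v v)
    (hc : 2 ≤ w.support.tail.count v) :
    ∃ (w1 w2 : G.Walk v v), w1.length < w.length ∧ w2.length < w.length ∧
      Lsum' x w = Lsum' x w1 + Lsum' x w2 := by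
  cases w with
  | nil => simp at hc
  | @cons _ b _ h p =>
    have hc' : 2 ≤ p.support.count v := by simpa using hc
    have hv : v ∈ p.support := List.count_pos_iff.mp (by omega)
    have hspec := p.take_spec hv
    have hlen : (p.takeUntil v hv).length + (p.dropUntil v hv).length = p.length := by
      have := congrArg SimpleGraph.Walk.length hspec
      rwa [SimpleGraph.Walk.length_append] at this
    have hcount1 : (p.takeUntil v hv).support.count v = 1 :=
      p.count_support_takeUntil_eq_one hv
    have hsupp : p.support = (p.takeUntil v hv).support ++ (p.dropUntil v hv).support.tail := by
      conv_lhs => rw [← hspec]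
      exact SimpleGraph.Walk.support_append _ _
    have hcount2 : 1 ≤ (p.dropUntil v hv).support.tail.count v := by
      rw [hsupp, List.count_append] at hc'
      omega
    have hdroplen : 1 ≤ (p.dropUntil v hv).length := by
      have hmem : v ∈ (p.dropUntil v hv).support.tail :=
        List.count_pos_iff.mp (by omega)
      have h1 : 1 ≤ (p.dropUntil v hv).support.tail.length :=
        List.length_pos_iff.mpr (List.ne_nil_of_mem hmem)
      have h2 : (p.dropUntil v hv).support.length = (p.dropUntil v hv).length + 1 :=
        SimpleGraph.Walk.length_support _
      have h3 : (p.dropUntil v hv).support.tail.length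
          = (p.dropUntil v hv).support.length - 1 := List.length_tail
      omega
    refine ⟨SimpleGraph.Walk.cons h (p.takeUntil v hv), p.dropUntil v hv, ?_, ?_, ?_⟩
    · simp only [SimpleGraph.Walk.length_cons]; omega
    · simp only [SimpleGraph.Walk.length_cons]; omega
    · have heq : Lsum' x p = Lsum' x (p.takeUntil v hv) + Lsum' x (p.dropUntil v hv) := by
        simp only [Lsum']
        conv_lhs => rw [← hspec]
        rw [SimpleGraph.Walk.edges_append, List.map_append, List.sum_append]
      have h2 : Lsum' x (SimpleGraph.Walk.cons h p) = x s(v, b) + Lsum' x p := by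
        simp [Lsum']
      have h3 : Lsum' x (SimpleGraph.Walk.cons h (p.takeUntil v hv))
          = x s(v, b) + Lsum' x (p.takeUntil v hv) := by simp [Lsum']
      rw [h2, h3, heq]; ring

lemma even_lsum_le {G : SimpleGraph V} (x : Sym2 V → ℤ)
    (hcyc : ∀ (u : V) (w : G.Walk u u), w.IsCycle → Even (Lsum' x w)) :
    ∀ (n : ℕ) {u : V} (w : G.Walk u u), w.length ≤ n → Even (Lsum' x w) := by
  intro n
  induction n using Nat.strong_induction_on with
  | _ n IH =>
  intro u w hn
  by_cases hnd : w.support.tail.Nodup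
  · -- small cases or a genuine cycle
    cases w with
    | nil => simp [Lsum']
    | @cons _ v _ h p =>
      cases p with
      | nil => simp at h
      | @cons _ v2 _ h2 q =>
        cases q with
        | nil =>
          have heq : s(v, u) = s(u, v) := Sym2.eq_swap
          simp only [Lsum', SimpleGraph.Walk.edges_cons, SimpleGraph.Walk.edges_nil,
            List.map_cons, List.map_nil, List.sum_cons, List.sum_nil, add_zero, heq]
          exact Even.add_self _
        | @cons _ v3 _ h3 r =>
          have hpath : (SimpleGraph.Walk.cons h2 (SimpleGraph.Walk.cons h3 r)).IsPath := by
            rw [SimpleGraph.Walk.isPath_def]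
            simpa using hnd
          have hne : s(u, v) ∉ (SimpleGraph.Walk.cons h2 (SimpleGraph.Walk.cons h3 r)).edges := by
            intro hmem
            rw [SimpleGraph.Walk.edges_cons, List.mem_cons] at hmem
            rcases hmem with heq | hmem
            · rw [Sym2.eq_iff] at heq
              rcases heq with ⟨rfl, rfl⟩ | ⟨rfl, hvv⟩
              · exact G.irrefl h
              · have hp2 : (SimpleGraph.Walk.cons h3 r).IsPath := hpath.of_cons
                have hmem2 : u ∈ r.support := r.end_mem_support
                have hnd2 := hp2.support_nodup
                rw [SimpleGraph.Walk.support_cons, List.nodup_cons] at hnd2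
                exact hnd2.1 hmem2
            · have hv : v ∈ (SimpleGraph.Walk.cons h3 r).support :=
                SimpleGraph.Walk.snd_mem_support_of_mem_edges _ hmem
              have hnd2 := hpath.support_nodup
              rw [SimpleGraph.Walk.support_cons, List.nodup_cons] at hnd2
              exact hnd2.1 hv
          exact hcyc u _ ((SimpleGraph.Walk.cons_isCycle_iff _ h).mpr ⟨hpath, hne⟩)
  · -- a repeated vertex: rotate and split
    obtain ⟨v, hv2⟩ : ∃ v, 2 ≤ w.support.tail.count v := by
      by_contra hcon
      push_neg at hcon
      exact hnd (List.nodup_iff_count_le_one.mpr fun a => by have := hcon a; omega)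
    have hvmem : v ∈ w.support := by
      refine List.mem_of_mem_tail ?_
      exact List.count_pos_iff.mp (by omega)
    set w' := w.rotate v hvmem with hw'
    have hlen' : w'.length = w.length := by
      have hd := (w.rotate_darts v hvmem).perm.length_eq
      rwa [SimpleGraph.Walk.length_darts, SimpleGraph.Walk.length_darts] at hd
    have hsum' : Lsum' x w' = Lsum' x w := by
      unfold Lsum'
      exact ((w.rotate_edges v hvmem).perm.map x).sum_eq
    have hcnt' : 2 ≤ w'.support.tail.count v := by
      rw [(SimpleGraph.Walk.support_rotate w v hvmem).perm.count_eq]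
      exact hv2
    obtain ⟨w1, w2, hl1, hl2, hsum⟩ := split_closed x w' hcnt'
    have e1 : Even (Lsum' x w1) := by
      rcases n with _ | m
      · omega
      · exact IH (w1.length) (by omega) w1 le_rfl
    have e2 : Even (Lsum' x w2) := by
      rcases n with _ | m
      · omega
      · exact IH (w2.length) (by omega) w2 le_rfl
    rw [← hsum', hsum]
    exact e1.add e2

lemma even_lsum_closed {G : SimpleGraph V} (x : Sym2 V → ℤ)
    (hcyc : ∀ (u : V) (w : G.Walk u u), w.IsCycle → Even (Lsum' x w))
    {u : V} (w : G.Walk u u) : Even (Lsum' x w) :=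
  even_lsum_le x hcyc w.length w le_rfl

lemma cut_parity {G : SimpleGraph V} (S : Set V) :
    ∀ {u v : V} (w : G.Walk u v),
      Lsum' (cutVecZ G S) w % 2
        = ((if u ∈ S then (1 : ℤ) else 0) + (if v ∈ S then (1 : ℤ) else 0)) % 2 := by
  intro u v w
  induction w with
  | nil =>
    simp only [Lsum', SimpleGraph.Walk.edges_nil, List.map_nil, List.sum_nil]
    split_ifs <;> norm_num
  | @cons a b c h p ih =>
    have hcons : Lsum' (cutVecZ G S) (SimpleGraph.Walk.cons h p)
        = cutVecZ G S s(a, b) + Lsum' (cutVecZ G S) p := by simp [Lsum']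
    have hval : cutVecZ G S s(a, b)
        = if (a ∈ S ∧ b ∉ S) ∨ (b ∈ S ∧ a ∉ S) then 1 else 0 := by
      simp [cutVecZ, h, inCut_iff]
    rw [hcons, hval]
    by_cases ha : a ∈ S <;> by_cases hb : b ∈ S <;>
      simp only [ha, hb, not_true_eq_false, not_false_eq_true, true_and, false_and,
        and_true, and_false, or_false, false_or, true_or, or_true,
        if_true, if_false, ite_true, ite_false] at ih ⊢ <;>
      omega

lemma even_cutsum_closed {G : SimpleGraph V} (S : Set V) {u : V} (w : G.Walk u u) :
    Even (Lsum' (cutVecZ G S) w) := by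
  rw [Int.even_iff, cut_parity S w]
  by_cases h : u ∈ S <;> simp [h]

lemma cutVec_single {G : SimpleGraph V} {i j : V} (hij : G.Adj i j) :
    cutVecZ G {i} + cutVecZ G {j} - cutVecZ G ({i, j} : Set V)
      = fun f => if f = s(i, j) then 2 else 0 := by
  funext f
  induction f with
  | _ a b =>
  by_cases hf : s(a, b) ∈ G.edgeSet
  · have hab : a ≠ b := (G.mem_edgeSet.mp hf).ne
    have hijne : i ≠ j := hij.ne
    simp only [Pi.sub_apply, Pi.add_apply, cutVecZ, hf, true_and, inCut_iff,
      Set.mem_singleton_iff, Set.mem_insert_iff, Sym2.eq_iff]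
    by_cases hai : a = i <;> by_cases haj : a = j <;> by_cases hbi : b = i <;>
      by_cases hbj : b = j <;> simp_all
  · have h2 : ¬ (s(a, b) = s(i, j)) := by
      intro h
      exact hf (h ▸ (G.mem_edgeSet.mpr hij))
    simp only [Pi.sub_apply, Pi.add_apply, cutVecZ, hf, false_and, if_false, h2,
      ite_false]
    norm_num

lemma two_chi_mem_span [Fintype V] {G : SimpleGraph V} {e : Sym2 V}
    (he : e ∈ G.edgeSet) :
    (fun f => if f = e then (2 : ℤ) else 0)
      ∈ Submodule.span ℤ (Set.range (cutVecZ G)) := by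
  induction e with
  | _ i j =>
  have hij : G.Adj i j := G.mem_edgeSet.mp he
  rw [← cutVec_single hij]
  exact sub_mem
    (add_mem (Submodule.subset_span (Set.mem_range_self _))
      (Submodule.subset_span (Set.mem_range_self _)))
    (Submodule.subset_span (Set.mem_range_self _))

lemma even_mem_span [Fintype V] {G : SimpleGraph V} (z : Sym2 V → ℤ)
    (h0 : ∀ e ∉ G.edgeSet, z e = 0) (he : ∀ e, Even (z e)) :
    z ∈ Submodule.span ℤ (Set.range (cutVecZ G)) := by
  have hz : z = ∑ e : Sym2 V, (z e / 2) • (fun f => if f = e then (2 : ℤ) else 0) := by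
    funext f
    rw [Finset.sum_apply]
    simp only [Pi.smul_apply, smul_eq_mul, mul_ite, mul_zero]
    rw [Finset.sum_ite_eq Finset.univ f (fun e => z e / 2 * 2)]
    simp only [Finset.mem_univ, if_true]
    exact (Int.ediv_mul_cancel (he f).two_dvd).symm
  rw [hz]
  refine Submodule.sum_mem _ fun e _ => ?_
  by_cases hedge : e ∈ G.edgeSet
  · exact Submodule.smul_mem _ _ (two_chi_mem_span hedge)
  · rw [h0 e hedge]
    simp only [Int.zero_ediv, zero_smul]
    exact Submodule.zero_mem _

end CutLatticeAux

open CutLatticeAux in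
/-- For a finite simple graph `G` and an integer vector `x` indexed by edges,
`x` lies in the lattice generated by the cuts of `G` iff `x(C)` is even for every
circuit (edge set of a cycle) `C` of `G`. -/
theorem mem_latticeOfCuts_iff {V : Type*} [Fintype V] (G : SimpleGraph V)
    (x : Sym2 V → ℤ) (hx : ∀ e ∉ G.edgeSet, x e = 0) :
    x ∈ Submodule.span ℤ (Set.range (cutVecZ G)) ↔
      ∀ (u : V) (w : G.Walk u u), w.IsCycle →
        Even (∑ e ∈ w.edges.toFinset, x e) := by
  constructor
  · -- forward direction
    intro hmem u w hw
    have hnodup : w.edges.Nodup := hw.isCircuit.isTrail.edges_nodup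
    have key : ∀ (y : Sym2 V → ℤ), y ∈ Submodule.span ℤ (Set.range (cutVecZ G)) →
        Even (∑ e ∈ w.edges.toFinset, y e) := by
      intro y hy
      refine Submodule.span_induction ?_ ?_ ?_ ?_ hy
      · rintro _ ⟨S, rfl⟩
        have hls : (∑ e ∈ w.edges.toFinset, cutVecZ G S e) = Lsum' (cutVecZ G S) w := by
          rw [List.sum_toFinset _ hnodup]
          rfl
        rw [hls]
        exact even_cutsum_closed S w
      · simp
      · intro a b _ _ ha hb
        have : (∑ e ∈ w.edges.toFinset, (a + b) e)
            = (∑ e ∈ w.edges.toFinset, a e) + (∑ e ∈ w.edges.toFinset, b e) := by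
          rw [← Finset.sum_add_distrib]; rfl
        rw [this]
        exact ha.add hb
      · intro c a _ ha
        have : (∑ e ∈ w.edges.toFinset, (c • a) e) = c * (∑ e ∈ w.edges.toFinset, a e) := by
          rw [Finset.mul_sum]; rfl
        rw [this]
        exact ha.mul_left c
    exact key x hmem
  · -- backward direction
    intro hcyc
    have hcyc' : ∀ (u : V) (w : G.Walk u u), w.IsCycle → Even (Lsum' x w) := by
      intro u w hw
      have hnodup : w.edges.Nodup := hw.isCircuit.isTrail.edges_nodup
      have hls : (∑ e ∈ w.edges.toFinset, x e) = Lsum' x w := by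
        rw [List.sum_toFinset _ hnodup]
        rfl
      rw [← hls]
      exact hcyc u w hw
    -- choose a root in each connected component and a walk to each vertex
    have hreach : ∀ v : V, G.Reachable ((G.connectedComponentMk v).out) v := fun v =>
      SimpleGraph.ConnectedComponent.exact (Quot.out_eq _)
    have hwalk : ∀ v : V, ∃ _w : G.Walk ((G.connectedComponentMk v).out) v, True := fun v =>
      (hreach v).elim fun w => ⟨w, trivial⟩
    choose wlk _ using hwalk
    set S : Set V := {v | ¬ Even (Lsum' x (wlk v))} with hS
    have key : ∀ a b : V, G.Adj a b → Even (x s(a, b) - cutVecZ G S s(a, b)) := by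
      intro a b hab
      have hr : (G.connectedComponentMk a).out = (G.connectedComponentMk b).out := by
        rw [SimpleGraph.ConnectedComponent.sound hab.reachable]
      -- closed walk root → a → b → root
      set c : G.Walk ((G.connectedComponentMk a).out) ((G.connectedComponentMk a).out) :=
        (wlk a).append (SimpleGraph.Walk.cons hab ((wlk b).reverse.copy rfl hr.symm)) with hc
      have hev : Even (Lsum' x c) := even_lsum_closed x hcyc' c
      have hdecomp : Lsum' x c = Lsum' x (wlk a) + x s(a, b) + Lsum' x (wlk b) := by
        simp only [hc, Lsum', SimpleGraph.Walk.edges_append, SimpleGraph.Walk.edges_cons,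
          SimpleGraph.Walk.edges_copy, SimpleGraph.Walk.edges_reverse, List.map_append,
          List.sum_append, List.map_cons, List.sum_cons, List.map_reverse, List.sum_reverse]
        ring
      rw [hdecomp] at hev
      have hmemS : ∀ v : V, (v ∈ S ↔ ¬ Even (Lsum' x (wlk v))) := fun v => Iff.rfl
      have hedge : s(a, b) ∈ G.edgeSet := G.mem_edgeSet.mpr hab
      rw [Int.even_iff] at hev ⊢
      by_cases hA : Even (Lsum' x (wlk a)) <;> by_cases hB : Even (Lsum' x (wlk b))
      · have hval : cutVecZ G S s(a, b) = 0 := by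
          simp only [cutVecZ, hedge, true_and, inCut_iff, if_neg]
          rw [if_neg]
          rintro (⟨h1, _⟩ | ⟨h1, _⟩)
          · exact ((hmemS a).mp h1) hA
          · exact ((hmemS b).mp h1) hB
        rw [hval]
        rw [Int.even_iff] at hA hB
        omega
      · have hval : cutVecZ G S s(a, b) = 1 := by
          simp only [cutVecZ, hedge, true_and]
          rw [if_pos]
          exact (inCut_iff S a b).mpr (Or.inr ⟨(hmemS b).mpr hB, fun hmm => ((hmemS a).mp hmm) hA⟩)
        rw [hval]
        rw [Int.even_iff] at hA
        rw [Int.not_even_iff] at hB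
        omega
      · have hval : cutVecZ G S s(a, b) = 1 := by
          simp only [cutVecZ, hedge, true_and]
          rw [if_pos]
          exact (inCut_iff S a b).mpr (Or.inl ⟨(hmemS a).mpr hA, fun hmm => ((hmemS b).mp hmm) hB⟩)
        rw [hval]
        rw [Int.not_even_iff] at hA
        rw [Int.even_iff] at hB
        omega
      · have hval : cutVecZ G S s(a, b) = 0 := by
          simp only [cutVecZ, hedge, true_and, inCut_iff, if_neg]
          rw [if_neg]
          rintro (⟨_, h2⟩ | ⟨_, h2⟩)
          · exact h2 ((hmemS b).mpr hB)
          · exact h2 ((hmemS a).mpr hA)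
        rw [hval]
        rw [Int.not_even_iff] at hA hB
        omega
    have hz0 : ∀ e ∉ G.edgeSet, (x - cutVecZ G S) e = 0 := by
      intro e he
      have h1 : cutVecZ G S e = 0 := by
        simp [cutVecZ, he]
      simp [hx e he, h1]
    have hzeven : ∀ e, Even ((x - cutVecZ G S) e) := by
      intro e
      induction e with
      | _ a b =>
      by_cases he : s(a, b) ∈ G.edgeSet
      · exact key a b (G.mem_edgeSet.mp he)
      · rw [hz0 _ he]
        exact Even.zero
    have hmem : (x - cutVecZ G S) ∈ Submodule.span ℤ (Set.range (cutVecZ G)) :=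
      even_mem_span _ hz0 hzeven
    have hxeq : x = cutVecZ G S + (x - cutVecZ G S) := by ring
    rw [hxeq]
    exact add_mem (Submodule.subset_span (Set.mem_range_self _)) hmem
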